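/- For every context-free grammar G in Chomsky normal form with terminals Γ, the Kopczyński obfuscation kop(G) is a regular tree language over the ranked alphabet Γ ∪ {a,c} (terminals having arity 0, a arity 2, c arity 0). -/

import Mathlib

inductive Term (σ : Type) : Type
  | port : Term σ
  | node : σ → List (Term σ) → Term σ

namespace Term

variable {σ : Type}

def ports : Term σ → ℕ
  | .port => 1
  | .node _ ts => (ts.attach.map fun x => ports x.1).sum
decreasing_by
  simp_wf
  have := List.sizeOf_lt_of_mem x.2
  omega

def size : Term σ → ℕ
  | .port => 1
  | .node _ ts => 1 + (ts.attach.map fun x => size x.1).sum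
decreasing_by
  simp_wf
  have := List.sizeOf_lt_of_mem x.2
  omega

def WF (ar : σ → ℕ) : Term σ → Prop
  | .port => True
  | .node a ts => ts.length = ar a ∧ ∀ t ∈ ts.attach, WF ar t.1
decreasing_by
  simp_wf
  have := List.sizeOf_lt_of_mem t.2
  omega

mutual
def subst1 : Term σ → List (Term σ) → Term σ × List (Term σ)
  | .port, l => (l.headD .port, l.tail)
  | .node a ts, l => let p := substL ts l; (.node a p.1, p.2)
def substL : List (Term σ) → List (Term σ) → List (Term σ) × List (Term σ)
  | [], l => ([], l)
  | t :: ts, l => let p := subst1 t l; let q := substL ts p.2; (p.1 :: q.1, q.2)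
end

/-- Substitute the terms `l` for the ports of `t`, in left-to-right order. -/
def subst (t : Term σ) (l : List (Term σ)) : Term σ := (subst1 t l).1

def eval {Q : Type} (δ : σ → List Q → Q) (q0 : Q) : Term σ → Q
  | .port => q0
  | .node a ts => δ a (ts.attach.map fun x => eval δ q0 x.1)
decreasing_by
  simp_wf
  have := List.sizeOf_lt_of_mem x.2
  omega

end Term

inductive TStar {σ : Type} (t : Term σ) : Term σ → Prop
  | base : TStar t Term.port
  | step {u v : Term σ} : TStar t u → TStar t v → TStar t (t.subst [u, v])

def LEquiv {σ : Type} (ar : σ → ℕ) (L : Set (Term σ)) (n : ℕ) (u u' : Term σ) : Prop :=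
  u.ports = n ∧ u'.ports = n ∧
  ∀ s : Term σ, s.ports = 1 → s.WF ar →
    ∀ l : List (Term σ), l.length = n → (∀ x ∈ l, x.ports = 0 ∧ x.WF ar) →
      (s.subst [u.subst l] ∈ L ↔ s.subst [u'.subst l] ∈ L)

def RegularTree {σ : Type} (ar : σ → ℕ) (L : Set (Term σ)) : Prop :=
  ∃ (Q : Type) (_ : Finite Q) (δ : σ → List Q → Q) (q0 : Q) (F : Set Q),
    L = {u | u.ports = 0 ∧ u.WF ar ∧ u.eval δ q0 ∈ F}

def RegularWord {Γ : Type} (K : Set (List Γ)) : Prop :=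
  ∃ (Q : Type) (_ : Fintype Q) (M : DFA Γ Q), K = M.accepts

/-- A context-free grammar in Chomsky normal form: rules `A → B C` and `A → σ`. -/
structure CNF (Γ N : Type) where
  start : N
  rule2 : N → N → N → Prop
  rule1 : N → Γ → Prop

/-- Derivation trees: internal nodes labeled by nonterminals, leaves by terminals. -/
inductive DTree (Γ N : Type) : Type
  | leaf : Γ → DTree Γ N
  | node : N → DTree Γ N → DTree Γ N → DTree Γ N

def DTree.yield {Γ N : Type} : DTree Γ N → List Γ
  | .leaf a => [a]
  | .node _ l r => l.yield ++ r.yield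

/-- `IsDeriv G d A`: `d` is a derivation tree of `G` from nonterminal `A`. -/
def IsDeriv {Γ N : Type} (G : CNF Γ N) : DTree Γ N → N → Prop
  | .leaf a, A => G.rule1 A a
  | .node B l r, A => B = A ∧ ∃ C D, G.rule2 A C D ∧ IsDeriv G l C ∧ IsDeriv G r D

/-- The word language generated by `G`. -/
def CNF.lang {Γ N : Type} (G : CNF Γ N) : Set (List Γ) :=
  {w | ∃ d : DTree Γ N, IsDeriv G d G.start ∧ d.yield = w}

/-- The ranked alphabet `Γ ∪ {a, c}`: `Sum.inr true` is the binary letter `a`,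
`Sum.inr false` is the nullary letter `c`, and letters of `Γ` have arity 0. -/
abbrev KLetter (Γ : Type) := Γ ⊕ Bool

def arK {Γ : Type} : KLetter Γ → ℕ
  | .inr true => 2
  | _ => 0

/-- All labels of the term are among `{a, c}`. -/
def OnlyAC {Γ : Type} : Term (KLetter Γ) → Prop
  | .port => True
  | .node x ts => (∃ b : Bool, x = .inr b) ∧ ∀ u ∈ ts.attach, OnlyAC u.1
decreasing_by
  simp_wf
  have := List.sizeOf_lt_of_mem u.2
  omega

def leafT {Γ : Type} (g : Γ) : Term (KLetter Γ) := .node (.inl g) []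

/-- `KopD d u`: `u` is obtained from the derivation tree `d` by replacing each
nonterminal occurrence by some 2-ary term over `{a, c}`. -/
inductive KopD {Γ N : Type} : DTree Γ N → Term (KLetter Γ) → Prop
  | leaf (g : Γ) : KopD (.leaf g) (leafT g)
  | node (A : N) (l r : DTree Γ N) (s u v : Term (KLetter Γ)) :
      s.ports = 2 → s.WF arK → OnlyAC s → KopD l u → KopD r v →
      KopD (.node A l r) (s.subst [u, v])

/-- The Kopczyński obfuscation of `G`. -/
def kopLang {Γ N : Type} (G : CNF Γ N) : Set (Term (KLetter Γ)) :=
  {u | ∃ d : DTree Γ N, IsDeriv G d G.start ∧ KopD d u}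

/-- The left-to-right word of `Γ`-labeled leaves of a tree over `Γ ∪ {a,c}`. -/
def gyield {Γ : Type} : Term (KLetter Γ) → List Γ
  | .port => []
  | .node (.inl g) _ => [g]
  | .node (.inr _) ts => (ts.attach.map fun x => gyield x.1).flatten
decreasing_by
  simp_wf
  have := List.sizeOf_lt_of_mem x.2
  omega

section Aux
open Term

variable {σ : Type}

theorem Term.rec' {P : Term σ → Prop} (hp : P .port)
    (hn : ∀ a ts, (∀ t ∈ ts, P t) → P (.node a ts)) : ∀ t, P t
  | .port => hp
  | .node a ts => hn a ts (fun t ht => have := List.sizeOf_lt_of_mem ht; Term.rec' hp hn t)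
termination_by t => sizeOf t
decreasing_by simp_wf; omega

@[simp] theorem ports_port : (Term.port : Term σ).ports = 1 := by rw [Term.ports]

@[simp] theorem ports_node (a : σ) (ts : List (Term σ)) :
    (Term.node a ts).ports = (ts.map Term.ports).sum := by
  rw [Term.ports]; congr 1; exact List.attach_map_val

@[simp] theorem wf_port (ar : σ → ℕ) : (Term.port : Term σ).WF ar := by rw [Term.WF]; trivial

@[simp] theorem wf_node (ar : σ → ℕ) (a : σ) (ts : List (Term σ)) :
    (Term.node a ts).WF ar ↔ ts.length = ar a ∧ ∀ t ∈ ts, t.WF ar := by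
  rw [Term.WF]
  constructor
  · rintro ⟨h1, h2⟩; exact ⟨h1, fun t ht => h2 ⟨t, ht⟩ (List.mem_attach _ _)⟩
  · rintro ⟨h1, h2⟩; exact ⟨h1, fun t _ => h2 t.1 t.2⟩

end Aux
section Aux2
open Term
variable {σ : Type}

@[simp] theorem subst1_port (l : List (Term σ)) :
    Term.subst1 .port l = (l.headD .port, l.tail) := by rw [Term.subst1]

@[simp] theorem subst1_node (a : σ) (ts : List (Term σ)) (l : List (Term σ)) :
    Term.subst1 (.node a ts) l = (.node a (Term.substL ts l).1, (Term.substL ts l).2) := by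
  rw [Term.subst1]

@[simp] theorem substL_nil (l : List (Term σ)) : Term.substL ([] : List (Term σ)) l = ([], l) := by
  rw [Term.substL]

@[simp] theorem substL_cons (t : Term σ) (ts l : List (Term σ)) :
    Term.substL (t :: ts) l =
      ((Term.subst1 t l).1 :: (Term.substL ts (Term.subst1 t l).2).1,
       (Term.substL ts (Term.subst1 t l).2).2) := by
  rw [Term.substL]

theorem substL_split_of (ts : List (Term σ))
    (H : ∀ t ∈ ts, ∀ l₁ l₂ : List (Term σ), l₁.length = t.ports →
      Term.subst1 t (l₁ ++ l₂) = ((Term.subst1 t l₁).1, l₂)) :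
    ∀ l₁ l₂ : List (Term σ), l₁.length = (ts.map Term.ports).sum →
      Term.substL ts (l₁ ++ l₂) = ((Term.substL ts l₁).1, l₂) := by
  induction ts with
  | nil =>
    intro l₁ l₂ h
    simp only [List.map_nil, List.sum_nil, List.length_eq_zero_iff] at h
    subst h; simp
  | cons t ts ih =>
    intro l₁ l₂ h
    simp only [List.map_cons, List.sum_cons] at h
    have hk : t.ports ≤ l₁.length := by omega
    have ht := H t (by simp)
    have h1 : Term.subst1 t (l₁ ++ l₂) = ((Term.subst1 t (l₁.take t.ports)).1, l₁.drop t.ports ++ l₂) := by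
      have := ht (l₁.take t.ports) (l₁.drop t.ports ++ l₂) (by rw [List.length_take]; omega)
      rwa [← List.append_assoc, List.take_append_drop] at this
    have h2 : Term.subst1 t l₁ = ((Term.subst1 t (l₁.take t.ports)).1, l₁.drop t.ports) := by
      have := ht (l₁.take t.ports) (l₁.drop t.ports) (by rw [List.length_take]; omega)
      rwa [List.take_append_drop] at this
    have h3 := ih (fun t ht => H t (by simp [ht])) (l₁.drop t.ports) l₂ (by simp; omega)
    simp [h1, h2, h3]

theorem subst1_split : ∀ t : Term σ, ∀ l₁ l₂ : List (Term σ), l₁.length = t.ports →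
    Term.subst1 t (l₁ ++ l₂) = ((Term.subst1 t l₁).1, l₂) := by
  intro t
  induction t using Term.rec' with
  | hp =>
    intro l₁ l₂ h
    simp only [ports_port] at h
    obtain ⟨u, rfl⟩ := List.length_eq_one_iff.mp h
    simp
  | hn a ts ih =>
    intro l₁ l₂ h
    simp only [ports_node] at h
    simp [substL_split_of ts ih l₁ l₂ h]

theorem substL_zero_of (ts : List (Term σ))
    (H : ∀ t ∈ ts, t.ports = 0 → ∀ l, Term.subst1 t l = (t, l)) :
    (ts.map Term.ports).sum = 0 → ∀ l, Term.substL ts l = (ts, l) := by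
  induction ts with
  | nil => intro _ l; simp
  | cons t ts ih =>
    intro h l
    simp only [List.map_cons, List.sum_cons, Nat.add_eq_zero] at h
    rw [substL_cons, H t (by simp) h.1, ih (fun u hu => H u (by simp [hu])) h.2]

theorem subst1_zero : ∀ t : Term σ, t.ports = 0 → ∀ l, Term.subst1 t l = (t, l) := by
  intro t
  induction t using Term.rec' with
  | hp => intro h; simp at h
  | hn a ts ih =>
    intro h l
    simp only [ports_node] at h
    rw [subst1_node, substL_zero_of ts ih h l]

theorem ports_subst1 : ∀ t : Term σ, ∀ l : List (Term σ), l.length = t.ports →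
    (∀ x ∈ l, x.ports = 0) → (Term.subst1 t l).1.ports = 0 := by
  have key : ∀ ts : List (Term σ),
      (∀ t ∈ ts, ∀ l : List (Term σ), l.length = t.ports → (∀ x ∈ l, x.ports = 0) →
        (Term.subst1 t l).1.ports = 0) →
      ∀ l : List (Term σ), l.length = (ts.map Term.ports).sum → (∀ x ∈ l, x.ports = 0) →
      ((Term.substL ts l).1.map Term.ports).sum = 0 := by
    intro ts
    induction ts with
    | nil => intro _ l h _; simp
    | cons t ts ih =>
      intro H l h h0
      simp only [List.map_cons, List.sum_cons] at h
      have hk : t.ports ≤ l.length := by omega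
      have e1 : l = l.take t.ports ++ l.drop t.ports := (List.take_append_drop _ _).symm
      have h2 : Term.subst1 t l = ((Term.subst1 t (l.take t.ports)).1, l.drop t.ports) := by
        have := subst1_split t (l.take t.ports) (l.drop t.ports) (by rw [List.length_take]; omega)
        rwa [List.take_append_drop] at this
      rw [substL_cons, h2]
      simp only [List.map_cons, List.sum_cons]
      have p1 : (Term.subst1 t (l.take t.ports)).1.ports = 0 :=
        H t (by simp) _ (by rw [List.length_take]; omega)
          (fun x hx => h0 x (List.mem_of_mem_take hx))
      have p2 := ih (fun u hu => H u (by simp [hu])) (l.drop t.ports)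
          (by simp; omega) (fun x hx => h0 x (List.mem_of_mem_drop hx))
      omega
  intro t
  induction t using Term.rec' with
  | hp =>
    intro l h h0
    obtain ⟨u, rfl⟩ := List.length_eq_one_iff.mp (by simpa using h)
    simp [h0 u (by simp)]
  | hn a ts ih =>
    intro l h h0
    simp only [ports_node] at h
    rw [subst1_node]
    simp only [ports_node]
    exact key ts ih l h h0

theorem wf_substL_of (ar : σ → ℕ) (ts : List (Term σ))
    (H : ∀ t ∈ ts, t.WF ar → ∀ l : List (Term σ), (∀ x ∈ l, x.WF ar) →
      (Term.subst1 t l).1.WF ar ∧ ∀ x ∈ (Term.subst1 t l).2, x.WF ar)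
    (hts : ∀ t ∈ ts, t.WF ar) :
    ∀ l, (∀ x ∈ l, x.WF ar) →
      (Term.substL ts l).1.length = ts.length ∧ (∀ x ∈ (Term.substL ts l).1, x.WF ar) ∧
      (∀ x ∈ (Term.substL ts l).2, x.WF ar) := by
  induction ts with
  | nil => intro l hl; refine ⟨by simp, by simp, by simpa using hl⟩
  | cons t ts ih =>
    intro l hl
    have h1 := H t (by simp) (hts t (by simp)) l hl
    have h2 := ih (fun u hu => H u (by simp [hu])) (fun u hu => hts u (by simp [hu])) _ h1.2
    rw [substL_cons]
    refine ⟨by simpa using h2.1, ?_, h2.2.2⟩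
    intro x hx
    simp at hx
    rcases hx with rfl | hx
    · exact h1.1
    · exact h2.2.1 x hx

theorem wf_subst1 (ar : σ → ℕ) : ∀ t : Term σ, t.WF ar → ∀ l : List (Term σ),
    (∀ x ∈ l, x.WF ar) → (Term.subst1 t l).1.WF ar ∧ ∀ x ∈ (Term.subst1 t l).2, x.WF ar := by
  intro t
  induction t using Term.rec' with
  | hp =>
    intro _ l hl
    cases l with
    | nil => exact ⟨by simpa using wf_port ar, by simp⟩
    | cons x l =>
      rw [subst1_port]
      exact ⟨hl x (by simp), fun y hy => hl y (by simp at hy ⊢; exact Or.inr hy)⟩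
  | hn a ts ih =>
    intro hwf l hl
    rw [wf_node] at hwf
    obtain ⟨hlen, hts⟩ := hwf
    have := wf_substL_of ar ts (fun t ht => ih t ht) hts l hl
    rw [subst1_node]
    exact ⟨(wf_node ar a _).mpr ⟨by rw [this.1, hlen], this.2.1⟩, this.2.2⟩

theorem subst_node2 (x : σ) (s₁ s₂ : Term σ) (l : List (Term σ))
    (h : l.length = s₁.ports + s₂.ports) :
    Term.subst (.node x [s₁, s₂]) l =
      .node x [Term.subst s₁ (l.take s₁.ports), Term.subst s₂ (l.drop s₁.ports)] := by
  have hk : s₁.ports ≤ l.length := by omega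
  have h1 : Term.subst1 s₁ l = ((Term.subst1 s₁ (l.take s₁.ports)).1, l.drop s₁.ports) := by
    have := subst1_split s₁ (l.take s₁.ports) (l.drop s₁.ports) (by rw [List.length_take]; omega)
    rwa [List.take_append_drop] at this
  have h2 : Term.subst1 s₂ (l.drop s₁.ports) =
      ((Term.subst1 s₂ (l.drop s₁.ports)).1, []) := by
    conv_lhs => rw [show l.drop s₁.ports = l.drop s₁.ports ++ [] by simp]
    rw [subst1_split _ _ _ (by simp; omega)]
  unfold Term.subst
  rw [subst1_node, substL_cons, h1, substL_cons, h2, substL_nil]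

@[simp] theorem subst_port (u : Term σ) : Term.subst .port [u] = u := by
  unfold Term.subst; simp

theorem subst_zero (t : Term σ) (h : t.ports = 0) : Term.subst t [] = t := by
  unfold Term.subst; rw [subst1_zero t h]

end Aux2
section Aux3

variable {Γ N : Type}

@[simp] theorem onlyAC_port : OnlyAC (Term.port : Term (KLetter Γ)) := by
  rw [OnlyAC]; trivial

@[simp] theorem onlyAC_node (x : KLetter Γ) (ts : List (Term (KLetter Γ))) :
    OnlyAC (Term.node x ts) ↔ (∃ b : Bool, x = .inr b) ∧ ∀ t ∈ ts, OnlyAC t := by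
  rw [OnlyAC]
  constructor
  · rintro ⟨h1, h2⟩; exact ⟨h1, fun t ht => h2 ⟨t, ht⟩ (List.mem_attach _ _)⟩
  · rintro ⟨h1, h2⟩; exact ⟨h1, fun t _ => h2 t.1 t.2⟩

/-- Shapes of partial obfuscation pieces: the automaton's basic facts. -/
inductive Sh (N : Type) : Type
  | pure : Sh N
  | real : N → Sh N
  | half : N → Sh N
  | two : N → N → Sh N

instance [Finite N] : Finite (Sh N) := by
  have e : Sh N ≃ (Unit ⊕ N ⊕ N ⊕ N × N) :=
    { toFun := fun sh => match sh with
        | .pure => .inl ()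
        | .real A => .inr (.inl A)
        | .half A => .inr (.inr (.inl A))
        | .two C D => .inr (.inr (.inr (C, D)))
      invFun := fun x => match x with
        | .inl _ => .pure
        | .inr (.inl A) => .real A
        | .inr (.inr (.inl A)) => .half A
        | .inr (.inr (.inr (C, D))) => .two C D
      left_inv := fun sh => by cases sh <;> rfl
      right_inv := fun x => by rcases x with _ | A | A | ⟨C, D⟩ <;> rfl }
  exact Finite.of_equiv _ e.symm

/-- Abbreviation for the binary node. -/
def aN (t₁ t₂ : Term (KLetter Γ)) : Term (KLetter Γ) := .node (.inr true) [t₁, t₂]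

/-- `Deco G t sh`: the bottom-up fact `sh` holds of the tree `t`. -/
inductive Deco (G : CNF Γ N) : Term (KLetter Γ) → Sh N → Prop
  | leafR {A g} : G.rule1 A g → Deco G (leafT g) (.real A)
  | ruleR {A C D t} : G.rule2 A C D → Deco G t (.two C D) → Deco G t (.real A)
  | halfOf {A t} : Deco G t (.real A) → Deco G t (.half A)
  | pureC : Deco G (.node (.inr false) []) .pure
  | pureA {t₁ t₂} : Deco G t₁ .pure → Deco G t₂ .pure → Deco G (aN t₁ t₂) .pure
  | halfL {C t₁ t₂} : Deco G t₁ (.half C) → Deco G t₂ .pure → Deco G (aN t₁ t₂) (.half C)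
  | halfR {C t₁ t₂} : Deco G t₁ .pure → Deco G t₂ (.half C) → Deco G (aN t₁ t₂) (.half C)
  | two11 {C D t₁ t₂} : Deco G t₁ (.half C) → Deco G t₂ (.half D) → Deco G (aN t₁ t₂) (.two C D)
  | two20 {C D t₁ t₂} : Deco G t₁ (.two C D) → Deco G t₂ .pure → Deco G (aN t₁ t₂) (.two C D)
  | two02 {C D t₁ t₂} : Deco G t₁ .pure → Deco G t₂ (.two C D) → Deco G (aN t₁ t₂) (.two C D)

theorem kopd_ports {d : DTree Γ N} {u : Term (KLetter Γ)} (h : KopD d u) :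
    u.ports = 0 ∧ u.WF arK := by
  induction h with
  | leaf g => constructor <;> simp [leafT, arK]
  | node A l r s u v hs hwf hac hl hr ihl ihr =>
    constructor
    · exact ports_subst1 s [u, v] (by simp [hs]) (by simp [ihl.1, ihr.1])
    · exact (wf_subst1 arK s hwf [u, v] (by simp [ihl.2, ihr.2])).1

/-- Soundness of `Deco`. -/
theorem deco_sound {G : CNF Γ N} {t : Term (KLetter Γ)} {sh : Sh N} (h : Deco G t sh) :
    match sh with
    | .pure => OnlyAC t ∧ t.ports = 0 ∧ t.WF arK
    | .real A => ∃ d, IsDeriv G d A ∧ KopD d t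
    | .half A => ∃ s u₁, OnlyAC s ∧ s.WF arK ∧ s.ports = 1 ∧
        (∃ d, IsDeriv G d A ∧ KopD d u₁) ∧ t = s.subst [u₁]
    | .two C D => ∃ s u₁ u₂, OnlyAC s ∧ s.WF arK ∧ s.ports = 2 ∧
        (∃ d, IsDeriv G d C ∧ KopD d u₁) ∧ (∃ d, IsDeriv G d D ∧ KopD d u₂) ∧
        t = s.subst [u₁, u₂] := by
  induction h with
  | @leafR A g h => exact ⟨.leaf g, h, .leaf g⟩
  | @ruleR A C D t h2 hd ih =>
    obtain ⟨s, u₁, u₂, hac, hwf, hp, ⟨d₁, hd₁, hk₁⟩, ⟨d₂, hd₂, hk₂⟩, rfl⟩ := ih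
    exact ⟨.node A d₁ d₂, ⟨rfl, C, D, h2, hd₁, hd₂⟩, .node A d₁ d₂ s u₁ u₂ hp hwf hac hk₁ hk₂⟩
  | @halfOf A t hd ih =>
    exact ⟨.port, t, onlyAC_port, wf_port arK, by simp, ih, by simp⟩
  | pureC => refine ⟨by simp, by simp, by simp [arK]⟩
  | @pureA t₁ t₂ h1 h2 ih1 ih2 =>
    refine ⟨by simp [aN, ih1.1, ih2.1], by simp [aN, ih1.2.1, ih2.2.1], ?_⟩
    simp [aN, arK, ih1.2.2, ih2.2.2]
  | @halfL C t₁ t₂ h1 h2 ih1 ih2 =>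
    obtain ⟨s, u₁, hac, hwf, hp, hd, rfl⟩ := ih1
    refine ⟨aN s t₂, u₁, by simp [aN, hac, ih2.1], by simp [aN, arK, hwf, ih2.2.2],
      by simp [aN, hp, ih2.2.1], hd, ?_⟩
    simp only [aN]; rw [subst_node2 _ s t₂ [u₁] (by simp [hp, ih2.2.1]), hp]
    simp [subst_zero t₂ ih2.2.1, aN]
  | @halfR C t₁ t₂ h1 h2 ih1 ih2 =>
    obtain ⟨s, u₁, hac, hwf, hp, hd, rfl⟩ := ih2
    refine ⟨aN t₁ s, u₁, by simp [aN, hac, ih1.1], by simp [aN, arK, hwf, ih1.2.2],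
      by simp [aN, hp, ih1.2.1], hd, ?_⟩
    simp only [aN]; rw [subst_node2 _ t₁ s [u₁] (by simp [hp, ih1.2.1]), ih1.2.1]
    simp [subst_zero t₁ ih1.2.1, aN]
  | @two11 C D t₁ t₂ h1 h2 ih1 ih2 =>
    obtain ⟨s, u₁, hac1, hwf1, hp1, hd1, rfl⟩ := ih1
    obtain ⟨s', u₂, hac2, hwf2, hp2, hd2, rfl⟩ := ih2
    refine ⟨aN s s', u₁, u₂, by simp [aN, hac1, hac2], by simp [aN, arK, hwf1, hwf2],
      by simp [aN, hp1, hp2], hd1, hd2, ?_⟩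
    simp only [aN]; rw [subst_node2 _ s s' [u₁, u₂] (by simp [hp1, hp2]), hp1]
    simp [aN]
  | @two20 C D t₁ t₂ h1 h2 ih1 ih2 =>
    obtain ⟨s, u₁, u₂, hac1, hwf1, hp1, hd1, hd2, rfl⟩ := ih1
    refine ⟨aN s t₂, u₁, u₂, by simp [aN, hac1, ih2.1], by simp [aN, arK, hwf1, ih2.2.2],
      by simp [aN, hp1, ih2.2.1], hd1, hd2, ?_⟩
    simp only [aN]; rw [subst_node2 _ s t₂ [u₁, u₂] (by simp [hp1, ih2.2.1]), hp1]
    simp [subst_zero t₂ ih2.2.1, aN]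
  | @two02 C D t₁ t₂ h1 h2 ih1 ih2 =>
    obtain ⟨s, u₁, u₂, hac2, hwf2, hp2, hd1, hd2, rfl⟩ := ih2
    refine ⟨aN t₁ s, u₁, u₂, by simp [aN, hac2, ih1.1], by simp [aN, arK, hwf2, ih1.2.2],
      by simp [aN, hp2, ih1.2.1], hd1, hd2, ?_⟩
    simp only [aN]; rw [subst_node2 _ t₁ s [u₁, u₂] (by simp [hp2, ih1.2.1]), ih1.2.1]
    simp [subst_zero t₁ ih1.2.1, aN]

end Aux3
section Aux4

variable {Γ N : Type}

def shOf : List N → Sh N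
  | [] => .pure
  | [C] => .half C
  | [C, D] => .two C D
  | _ => .pure

theorem deco_build (G : CNF Γ N) : ∀ s : Term (KLetter Γ), OnlyAC s → s.WF arK →
    s.ports ≤ 2 → ∀ l : List (Term (KLetter Γ) × N), l.length = s.ports →
    (∀ p ∈ l, p.1.ports = 0 ∧ Deco G p.1 (.real p.2)) →
    Deco G (Term.subst s (l.map Prod.fst)) (shOf (l.map Prod.snd)) := by
  intro s
  induction s using Term.rec' with
  | hp =>
    intro _ _ _ l hlen hl
    simp only [ports_port] at hlen
    obtain ⟨p, rfl⟩ := List.length_eq_one_iff.mp hlen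
    simpa [shOf] using Deco.halfOf (hl p (by simp)).2
  | hn x ts ih =>
    intro hac hwf hle l hlen hl
    rw [onlyAC_node] at hac
    obtain ⟨⟨b, rfl⟩, hacts⟩ := hac
    rw [wf_node] at hwf
    obtain ⟨hts, hwfts⟩ := hwf
    cases b with
    | false =>
      simp only [arK, List.length_eq_zero_iff] at hts
      subst hts
      simp only [ports_node, List.map_nil, List.sum_nil, List.length_eq_zero_iff] at hlen
      subst hlen
      simpa [Term.subst, shOf] using Deco.pureC
    | true =>
      simp only [arK] at hts
      obtain ⟨s₁, s₂, rfl⟩ : ∃ s₁ s₂, ts = [s₁, s₂] := by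
        rcases ts with _ | ⟨s₁, _ | ⟨s₂, _ | _⟩⟩ <;> simp at hts
        exact ⟨s₁, s₂, rfl⟩
      simp only [ports_node, List.map_cons, List.map_nil, List.sum_cons, List.sum_nil,
        Nat.add_zero] at hlen hle
      have hwf1 := hwfts s₁ (by simp)
      have hwf2 := hwfts s₂ (by simp)
      have hac1 := hacts s₁ (by simp)
      have hac2 := hacts s₂ (by simp)
      have ih1 := ih s₁ (by simp) hac1 hwf1 (by omega)
      have ih2 := ih s₂ (by simp) hac2 hwf2 (by omega)
      rw [subst_node2 _ s₁ s₂ _ (by simp [hlen]), ← List.map_take, ← List.map_drop]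
      have e1 := ih1 (l.take s₁.ports) (by rw [List.length_take]; omega)
        (fun p hp => hl p (List.mem_of_mem_take hp))
      have e2 := ih2 (l.drop s₁.ports) (by rw [List.length_drop]; omega)
        (fun p hp => hl p (List.mem_of_mem_drop hp))
      rcases l with _ | ⟨p, _ | ⟨q, _ | ⟨r, l⟩⟩⟩
      · -- l = []
        have h1 : s₁.ports = 0 := by simp at hlen; omega
        have h2 : s₂.ports = 0 := by simp at hlen; omega
        simp only [h1, h2, List.take_nil, List.drop_nil] at e1 e2 ⊢
        exact Deco.pureA e1 e2
      · -- l = [p]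
        simp only [List.length_cons, List.length_nil] at hlen
        have : s₁.ports = 0 ∨ s₁.ports = 1 := by omega
        rcases this with h1 | h1
        · have h2 : s₂.ports = 1 := by omega
          simp only [h1, List.take_zero, List.drop_zero] at e1 e2 ⊢
          simp only [List.map_nil, List.map_cons, shOf] at e1 e2 ⊢
          exact Deco.halfR e1 e2
        · have h2 : s₂.ports = 0 := by omega
          simp only [h1] at e1 e2 ⊢
          simp only [List.take_cons, List.take_zero, List.drop_succ_cons, List.drop_zero,
            List.map_cons, List.map_nil, shOf, List.take_succ_cons, List.take_nil,
            List.drop_nil] at e1 e2 ⊢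
          exact Deco.halfL e1 e2
      · -- l = [p, q]
        simp only [List.length_cons, List.length_nil] at hlen
        have : s₁.ports = 0 ∨ s₁.ports = 1 ∨ s₁.ports = 2 := by omega
        rcases this with h1 | h1 | h1
        · have h2 : s₂.ports = 2 := by omega
          simp only [h1, List.take_zero, List.drop_zero] at e1 e2 ⊢
          simp only [List.map_nil, List.map_cons, shOf] at e1 e2 ⊢
          exact Deco.two02 e1 e2
        · have h2 : s₂.ports = 1 := by omega
          simp only [h1, List.take_succ_cons, List.take_zero, List.drop_succ_cons,
            List.drop_zero, List.map_cons, List.map_nil, shOf] at e1 e2 ⊢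
          exact Deco.two11 e1 e2
        · have h2 : s₂.ports = 0 := by omega
          simp only [h1, List.take_succ_cons, List.take_nil, List.drop_succ_cons,
            List.drop_nil, List.map_cons, List.map_nil, shOf, List.take_zero,
            List.drop_zero] at e1 e2 ⊢
          exact Deco.two20 e1 e2
      · simp at hlen; omega

theorem pure_deco (G : CNF Γ N) {t : Term (KLetter Γ)} (hac : OnlyAC t) (hp : t.ports = 0)
    (hwf : t.WF arK) : Deco G t .pure := by
  have := deco_build G t hac hwf (by omega) [] (by simp [hp]) (by simp)
  simpa [shOf, subst_zero t hp] using this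

theorem kopd_deco {G : CNF Γ N} {d : DTree Γ N} {u : Term (KLetter Γ)} (hk : KopD d u) :
    ∀ A, IsDeriv G d A → Deco G u (.real A) := by
  induction hk with
  | leaf g =>
    intro A hA
    exact Deco.leafR hA
  | node A' l r s u v hs hwf hac hl hr ihl ihr =>
    intro A hA
    obtain ⟨rfl, C, D, h2, hdl, hdr⟩ := hA
    have hb := deco_build G s hac hwf (by omega) [(u, C), (v, D)] (by simp [hs])
      (by rintro p hp; simp at hp; rcases hp with rfl | rfl
          exacts [⟨(kopd_ports hl).1, ihl C hdl⟩, ⟨(kopd_ports hr).1, ihr D hdr⟩])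
    simp only [List.map_cons, List.map_nil, shOf] at hb
    exact Deco.ruleR h2 hb

end Aux4
section Aux5

variable {Γ N : Type}

def T2 (q₁ q₂ : Set (Sh N)) (C D : N) : Prop :=
  (Sh.half C ∈ q₁ ∧ Sh.half D ∈ q₂) ∨ (Sh.two C D ∈ q₁ ∧ Sh.pure ∈ q₂) ∨
    (Sh.pure ∈ q₁ ∧ Sh.two C D ∈ q₂)

def TR (G : CNF Γ N) (q₁ q₂ : Set (Sh N)) (A : N) : Prop :=
  ∃ C D, G.rule2 A C D ∧ T2 q₁ q₂ C D

def TH (G : CNF Γ N) (q₁ q₂ : Set (Sh N)) (C : N) : Prop :=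
  (Sh.half C ∈ q₁ ∧ Sh.pure ∈ q₂) ∨ (Sh.pure ∈ q₁ ∧ Sh.half C ∈ q₂) ∨ TR G q₁ q₂ C

def deltaK (G : CNF Γ N) : KLetter Γ → List (Set (Sh N)) → Set (Sh N)
  | .inl g, _ => {sh | match sh with
      | .real A => G.rule1 A g
      | .half A => G.rule1 A g
      | _ => False}
  | .inr false, _ => {Sh.pure}
  | .inr true, [q₁, q₂] => {sh | match sh with
      | .pure => Sh.pure ∈ q₁ ∧ Sh.pure ∈ q₂
      | .real A => TR G q₁ q₂ A
      | .half C => TH G q₁ q₂ C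
      | .two C D => T2 q₁ q₂ C D}
  | .inr true, _ => ∅

@[simp] theorem eval_node {σ Q : Type} (δ : σ → List Q → Q) (q0 : Q) (x : σ)
    (ts : List (Term σ)) :
    (Term.node x ts).eval δ q0 = δ x (ts.map (Term.eval δ q0)) := by
  rw [Term.eval]; congr 1; exact List.attach_map_val

theorem eval_deco (G : CNF Γ N) : ∀ t : Term (KLetter Γ), t.ports = 0 → t.WF arK →
    t.eval (deltaK G) ∅ = {sh | Deco G t sh} := by
  intro t
  induction t using Term.rec' with
  | hp => intro h; simp at h
  | hn x ts ih =>
    intro hp hwf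
    rw [wf_node] at hwf
    obtain ⟨hts, hwfts⟩ := hwf
    simp only [ports_node] at hp
    rw [eval_node]
    rcases x with g | b
    · -- terminal letter
      simp only [arK, List.length_eq_zero_iff] at hts
      subst hts
      ext sh
      simp only [List.map_nil, deltaK, Set.mem_setOf_eq]
      cases sh with
      | pure =>
        constructor
        · intro h; exact h.elim
        · intro h; cases h
      | real A =>
        constructor
        · intro h; exact Deco.leafR h
        · intro h
          cases h with
          | leafR h => exact h
          | ruleR h2 hd => cases hd
      | half A =>
        constructor
        · intro h; exact Deco.halfOf (Deco.leafR h)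
        · intro h
          cases h with
          | halfOf hr =>
            cases hr with
            | leafR h => exact h
            | ruleR h2 hd => cases hd
      | two C D =>
        constructor
        · intro h; exact h.elim
        · intro h; cases h
    · cases b with
      | false =>
        simp only [arK, List.length_eq_zero_iff] at hts
        subst hts
        ext sh
        simp only [List.map_nil, deltaK, Set.mem_singleton_iff]
        cases sh with
        | pure => simpa using Deco.pureC
        | real A =>
          simp only [Set.mem_setOf_eq]
          constructor
          · intro h; cases h
          · intro h
            cases h with
            | ruleR h2 hd => cases hd
        | half A =>
          simp only [Set.mem_setOf_eq]
          constructor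
          · intro h; cases h
          · intro h
            cases h with
            | halfOf hr =>
              cases hr with
              | ruleR h2 hd => cases hd
        | two C D =>
          simp only [Set.mem_setOf_eq]
          constructor
          · intro h; cases h
          · intro h; cases h
      | true =>
        simp only [arK] at hts
        obtain ⟨t₁, t₂, rfl⟩ : ∃ t₁ t₂, ts = [t₁, t₂] := by
          rcases ts with _ | ⟨t₁, _ | ⟨t₂, _ | _⟩⟩ <;> simp at hts
          exact ⟨t₁, t₂, rfl⟩
        simp only [List.map_cons, List.map_nil, List.sum_cons, List.sum_nil,
          Nat.add_zero] at hp
        have hp1 : t₁.ports = 0 := by omega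
        have hp2 : t₂.ports = 0 := by omega
        have e1 := ih t₁ (by simp) hp1 (hwfts t₁ (by simp))
        have e2 := ih t₂ (by simp) hp2 (hwfts t₂ (by simp))
        ext sh
        simp only [List.map_cons, List.map_nil, deltaK, Set.mem_setOf_eq, e1, e2]
        have hT2 : ∀ C D : N, T2 {sh | Deco G t₁ sh} {sh | Deco G t₂ sh} C D ↔
            Deco G (aN t₁ t₂) (.two C D) := by
          intro C D
          constructor
          · rintro (⟨h1, h2⟩ | ⟨h1, h2⟩ | ⟨h1, h2⟩)
            exacts [Deco.two11 h1 h2, Deco.two20 h1 h2, Deco.two02 h1 h2]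
          · intro h
            cases h with
            | two11 h1 h2 => exact Or.inl ⟨h1, h2⟩
            | two20 h1 h2 => exact Or.inr (Or.inl ⟨h1, h2⟩)
            | two02 h1 h2 => exact Or.inr (Or.inr ⟨h1, h2⟩)
        have hTR : ∀ A : N, TR G {sh | Deco G t₁ sh} {sh | Deco G t₂ sh} A ↔
            Deco G (aN t₁ t₂) (.real A) := by
          intro A
          constructor
          · rintro ⟨C, D, h2, hT⟩
            exact Deco.ruleR h2 ((hT2 C D).mp hT)
          · intro h
            cases h with
            | ruleR h2 hd => exact ⟨_, _, h2, (hT2 _ _).mpr hd⟩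
        cases sh with
        | pure =>
          constructor
          · rintro ⟨h1, h2⟩; exact Deco.pureA h1 h2
          · intro h
            cases h with
            | pureA h1 h2 => exact ⟨h1, h2⟩
        | real A => exact hTR A
        | half C =>
          constructor
          · rintro (⟨h1, h2⟩ | ⟨h1, h2⟩ | hR)
            exacts [Deco.halfL h1 h2, Deco.halfR h1 h2, Deco.halfOf ((hTR C).mp hR)]
          · intro h
            cases h with
            | halfOf hr => exact Or.inr (Or.inr ((hTR C).mpr hr))
            | halfL h1 h2 => exact Or.inl ⟨h1, h2⟩
            | halfR h1 h2 => exact Or.inr (Or.inl ⟨h1, h2⟩)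
        | two C D => exact hT2 C D

end Aux5

/-- The Kopczyński obfuscation of a CNF grammar is a regular tree language over
`Γ ∪ {a, c}`. -/
theorem kop_regular {Γ N : Type} [Finite N] (G : CNF Γ N) :
    RegularTree arK (kopLang G) := by
  refine ⟨Set (Sh N), inferInstance, deltaK G, ∅, {q | Sh.real G.start ∈ q}, ?_⟩
  ext u
  simp only [kopLang, Set.mem_setOf_eq]
  constructor
  · rintro ⟨d, hder, hkop⟩
    obtain ⟨hp, hw⟩ := kopd_ports hkop
    refine ⟨hp, hw, ?_⟩
    rw [eval_deco G u hp hw]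
    exact kopd_deco hkop _ hder
  · rintro ⟨hp, hw, hev⟩
    rw [eval_deco G u hp hw] at hev
    obtain ⟨d, hder, hkop⟩ := deco_sound hev
    exact ⟨d, hder, hkop⟩
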